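/- Suppose u ∈ A₀(G) is the identity and a product P = ∏_{k=1}^{N} (u + x·(H₀) + c_k) in the Burnside ring satisfies: (H₀) is a maximal element among orbit types appearing in all c_k (so coeff^{H₀}(c_k) = 0 and coeff^{H₀}(c_j · (H₀)) = 0, coeff^{H₀}(c_j·c_k) = 0 for all j,k), (H₀)·(H₀) = |W(H₀)|·(H₀) + d with coeff^{H₀}(d) = 0, and x·|W(H₀)| = 2. Then coeff^{H₀}(P) ≡ N·x (mod 2x); in particular if N is odd then coeff^{H₀}(P) ≠ 0. -/
import Mathlib

lemma stmt_14_key (R : Type*) [CommRing R]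
    (H₀ : R) (w x : ℤ) (hxw : x * w = 2)
    (I : Ideal R) (d : R) (hd : d ∈ I) (hsq : H₀ * H₀ = w • H₀ + d) :
    ∀ (N : ℕ) (c : Fin N → R), (∀ k, c k ∈ I) →
      ∃ b : ℤ, ∃ r : R, r ∈ I ∧ x ∣ b ∧ (2 * x) ∣ (b - (N : ℤ) * x) ∧
        ∏ k, (1 + x • H₀ + c k) = 1 + b • H₀ + r := by
  intro N
  induction N with
  | zero =>
      intro c hc
      exact ⟨0, 0, I.zero_mem, ⟨0, by ring⟩, ⟨0, by push_cast; ring⟩, by simp⟩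
  | succ n ih =>
      intro c hc
      obtain ⟨b, r, hr, ⟨m, hm⟩, ⟨t, ht⟩, hP⟩ := ih (fun k => c k.succ) (fun k => hc k.succ)
      refine ⟨3 * b + x, r + (x * b) • d + x • (H₀ * r) + c 0 * (1 + b • H₀ + r),
        ?_, ⟨3 * m + 1, by rw [hm]; ring⟩, ⟨t + m, ?_⟩, ?_⟩
      · exact I.add_mem (I.add_mem (I.add_mem hr (zsmul_mem hd (x*b)))
          (zsmul_mem (I.mul_mem_left H₀ hr) x)) (I.mul_mem_right _ (hc 0))
      · have : b - (n : ℤ) * x = 2 * x * t := ht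
        push_cast
        rw [hm] at this ⊢
        linarith
      · rw [Fin.prod_univ_succ, hP]
        simp only [zsmul_eq_mul]
        push_cast
        have hsq' : H₀ * H₀ = (w : R) * H₀ + d := by
          rw [hsq, zsmul_eq_mul]
        have hxw' : (x : R) * (w : R) = 2 := by
          have := congrArg (fun z : ℤ => (z : R)) hxw
          push_cast at this
          exact this
        linear_combination ((x : R) * b) * hsq' + ((b : R) * H₀) * hxw'

theorem stmt_14 (R : Type*) [CommRing R] (coeff : R →ₗ[ℤ] ℤ)
    (H₀ : R) (hcoeff1 : coeff 1 = 0) (hcoeffH : coeff H₀ = 1)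
    (w : ℤ) (hw : w = 1 ∨ w = 2) (x : ℤ) (hxw : x * w = 2)
    (I : Ideal R) (hI : ∀ r ∈ I, coeff r = 0 ∧ coeff (r * H₀) = 0)
    (d : R) (hd : d ∈ I) (hsq : H₀ * H₀ = w • H₀ + d)
    (N : ℕ) (c : Fin N → R) (hc : ∀ k, c k ∈ I) :
    Int.ModEq (2 * x) (coeff (∏ k, (1 + x • H₀ + c k))) ((N : ℤ) * x) ∧
    (Odd N → coeff (∏ k, (1 + x • H₀ + c k)) ≠ 0) := by
  obtain ⟨b, r, hr, hxb, ⟨t, ht⟩, hP⟩ := stmt_14_key R H₀ w x hxw I d hd hsq N c hc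
  have hx0 : x ≠ 0 := by rintro rfl; simp at hxw
  have hcoeffP : coeff (∏ k, (1 + x • H₀ + c k)) = b := by
    have := (hI r hr).1
    rw [hP, map_add, map_add, map_smul, hcoeff1, hcoeffH, this]
    simp
  rw [hcoeffP]
  constructor
  · exact (Int.modEq_iff_dvd.mpr ⟨-t, by linarith⟩)
  · rintro hodd rfl
    obtain ⟨j, hj⟩ := hodd
    have : (0 : ℤ) - (N : ℤ) * x = 2 * x * t := ht
    have h2N : (2 : ℤ) ∣ (N : ℤ) := by
      have hNx : (N : ℤ) * x = x * (-2 * t) := by linarith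
      have := mul_left_cancel₀ hx0 (by linarith [hNx] : x * (N : ℤ) = x * (-2 * t))
      exact ⟨-t, by linarith⟩
    omega
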